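/- (Bergman) Let C be the subalgebra of F⟨x,y⟩ generated by the elements u_i + ū_i, where u_i ranges over all nonempty minimally balanced words over {x,y} and ū_i is the letter-swap of u_i. If f ∈ C and f = g·h is any factorization of f in F⟨x,y⟩, then both g and h lie in C. -/

import Mathlib

/-- The imbalance of a word over `{x,y}` (with `x = true`, `y = false`):
number of `x`'s minus number of `y`'s. -/
def imbL (m : List Bool) : ℤ := (m.count true : ℤ) - (m.count false : ℤ)

/-- A nonempty word over `{x,y}` is minimally balanced if its imbalance is `0`
and every nonempty proper prefix has strictly positive imbalance. -/
def MinBal (m : List Bool) : Prop :=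
  m ≠ [] ∧ imbL m = 0 ∧ ∀ p : List Bool, p <+: m → p ≠ [] → p ≠ m → 0 < imbL p
noncomputable section

/-- The degree of a noncommutative polynomial in the free algebra
`F⟨X⟩ = MonoidAlgebra F (FreeMonoid X)`. -/
def ncDeg {F : Type*} [Field F] {X : Type*} (f : MonoidAlgebra F (FreeMonoid X)) : ℕ :=
  f.coeff.support.sup fun m => m.length

/-- The algebra homomorphism `F⟨X⟩ → F⟨x,y⟩` determined by its values `v i`
on the variables, extended multiplicatively to monomials and linearly. -/
def phiGen {F : Type*} [Field F] {X : Type*}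
    (v : X → MonoidAlgebra F (FreeMonoid Bool)) :
    MonoidAlgebra F (FreeMonoid X) →ₐ[F] MonoidAlgebra F (FreeMonoid Bool) :=
  MonoidAlgebra.lift F _ (FreeMonoid X) (FreeMonoid.lift v)

/-- The subalgebra `C` of `F⟨x,y⟩` generated by the elements `u + ū`, where `u`
ranges over all nonempty minimally balanced words over `{x,y}` and `ū` is the
letter-swap of `u`. -/
def bergmanC (F : Type*) [Field F] : Subalgebra F (MonoidAlgebra F (FreeMonoid Bool)) :=
  Algebra.adjoin F {p | ∃ m : List Bool, MinBal m ∧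
    p = MonoidAlgebra.of F (FreeMonoid Bool) (FreeMonoid.ofList m) +
        MonoidAlgebra.of F (FreeMonoid Bool) (FreeMonoid.ofList (m.map not))}

namespace BergmanAux
open scoped Classical
noncomputable section

theorem imbL_nil : imbL [] = 0 := by simp [imbL]
theorem imbL_append (u v : List Bool) : imbL (u ++ v) = imbL u + imbL v := by
  simp [imbL, List.count_append]; ring
theorem imbL_single (b : Bool) : imbL [b] = if b then 1 else -1 := by
  cases b <;> simp [imbL]
theorem imbL_cons (b : Bool) (w : List Bool) :
    imbL (b :: w) = (if b then 1 else -1) + imbL w := by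
  rw [show b :: w = [b] ++ w from rfl, imbL_append, imbL_single]
theorem imbL_map_not (w : List Bool) : imbL (w.map not) = - imbL w := by
  induction w with
  | nil => simp [imbL]
  | cons b w ih =>
    rw [List.map_cons, imbL_cons, imbL_cons, ih]
    cases b <;> simp <;> ring

theorem imbL_take_succ (w : List Bool) (i : ℕ) (h : i < w.length) :
    imbL (w.take (i + 1)) = imbL (w.take i) + (if w[i] then 1 else -1) := by
  rw [← List.take_concat_get' w i h, imbL_append, imbL_single]

/-- discrete intermediate value theorem for prefix imbalances -/
theorem ivt (w : List Bool) : ∀ n i j, j - i = n → i ≤ j →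
    0 < imbL (w.take i) → imbL (w.take j) < 0 →
    ∃ k, i < k ∧ k < j ∧ imbL (w.take k) = 0 := by
  intro n
  induction n with
  | zero =>
    intro i j hd hij hpos hneg
    have : i = j := by omega
    subst this; exact absurd hneg (by omega)
  | succ n ih =>
    intro i j hd hij hpos hneg
    have hiw : i < w.length := by
      by_contra hc
      push_neg at hc
      rw [List.take_of_length_le hc] at hpos
      rw [List.take_of_length_le (le_trans hc (by omega))] at hneg
      omega
    have hij' : i < j := by omega
    have hstep := imbL_take_succ w i hiw
    rcases eq_or_ne (imbL (w.take (i+1))) 0 with h0 | h0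
    · refine ⟨i + 1, by omega, ?_, h0⟩
      rcases eq_or_ne (i+1) j with he | he
      · rw [he] at h0; omega
      · omega
    · have hpos' : 0 < imbL (w.take (i+1)) := by
        rcases le_or_gt (imbL (w.take (i+1))) 0 with hle | hlt
        · exfalso
          have : imbL (w.take (i+1)) < 0 := lt_of_le_of_ne hle h0
          split at hstep <;> omega
        · exact hlt
      obtain ⟨k, hk1, hk2, hk3⟩ := ih (i+1) j (by omega) (by omega) hpos' hneg
      exact ⟨k, by omega, hk2, hk3⟩

/-- first return time to zero (for nonempty balanced words this is the length
of the first prime factor) -/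
noncomputable def firstRet (w : List Bool) : ℕ :=
  if h : ∃ k, 0 < k ∧ k ≤ w.length ∧ imbL (w.take k) = 0 then Nat.find h else w.length

theorem firstRet_pos {w : List Bool} (hw : w ≠ []) : 0 < firstRet w := by
  rw [firstRet]
  split
  case isTrue h => exact (Nat.find_spec h).1
  case isFalse h => exact List.length_pos_iff.2 hw

theorem firstRet_le (w : List Bool) : firstRet w ≤ w.length := by
  rw [firstRet]
  split
  case isTrue h =>
    obtain ⟨k, hk⟩ := h
    exact le_trans (Nat.find_min' _ hk) hk.2.1
  case isFalse h => exact le_rfl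

theorem firstRet_imb {w : List Bool} (hw : w ≠ []) (hbal : imbL w = 0) :
    imbL (w.take (firstRet w)) = 0 := by
  have hex : ∃ k, 0 < k ∧ k ≤ w.length ∧ imbL (w.take k) = 0 :=
    ⟨w.length, List.length_pos_iff.2 hw, le_rfl, by rwa [List.take_length]⟩
  rw [firstRet, dif_pos hex]
  exact (Nat.find_spec hex).2.2

theorem firstRet_min {w : List Bool} {j : ℕ} (h1 : 0 < j) (h2 : j < firstRet w) :
    imbL (w.take j) ≠ 0 := by
  intro hc
  have hjlen : j ≤ w.length := by
    have := firstRet_le w; omega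
  rw [firstRet] at h2
  split at h2
  case isTrue hex => exact absurd ⟨h1, hjlen, hc⟩ (Nat.find_min hex h2)
  case isFalse hex => exact hex ⟨j, h1, hjlen, hc⟩

theorem firstRet_eq_of {w : List Bool} {k : ℕ} (h1 : 0 < k) (h2 : k ≤ w.length)
    (h3 : imbL (w.take k) = 0) (h4 : ∀ j, 0 < j → j < k → imbL (w.take j) ≠ 0) :
    firstRet w = k := by
  have hex : ∃ k, 0 < k ∧ k ≤ w.length ∧ imbL (w.take k) = 0 := ⟨k, h1, h2, h3⟩
  rw [firstRet, dif_pos hex]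
  have hle : Nat.find hex ≤ k := Nat.find_min' _ ⟨h1, h2, h3⟩
  rcases eq_or_lt_of_le hle with he | hlt
  · exact he
  · obtain ⟨hf1, _, hf3⟩ := Nat.find_spec hex
    exact absurd hf3 (h4 _ hf1 hlt)

theorem firstRet_append {u : List Bool} (hu : imbL u = 0) (hune : u ≠ []) (v : List Bool) :
    firstRet (u ++ v) = firstRet u := by
  have hle := firstRet_le u
  apply firstRet_eq_of (firstRet_pos hune)
  · simp only [List.length_append]; omega
  · rw [List.take_append_of_le_length hle]
    exact firstRet_imb hune hu
  · intro j hj1 hj2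
    rw [List.take_append_of_le_length (by omega)]
    exact firstRet_min hj1 hj2


def IsPrimeW (p : List Bool) : Prop :=
  p ≠ [] ∧ imbL p = 0 ∧ ∀ k, 0 < k → k < p.length → imbL (p.take k) ≠ 0

noncomputable def primesAux : ℕ → List Bool → List (List Bool)
  | 0, _ => []
  | _ + 1, [] => []
  | n + 1, w => (w.take (firstRet w)) :: primesAux n (w.drop (firstRet w))

theorem primesAux_nil (n : ℕ) : primesAux n [] = [] := by
  cases n <;> rfl

theorem primesAux_cons (n : ℕ) {w : List Bool} (hw : w ≠ []) :
    primesAux (n + 1) w = (w.take (firstRet w)) :: primesAux n (w.drop (firstRet w)) := by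
  cases w with
  | nil => exact absurd rfl hw
  | cons b t => rfl

noncomputable def primesL (w : List Bool) : List (List Bool) := primesAux w.length w

theorem primesAux_fuel : ∀ n m (w : List Bool), w.length ≤ n → w.length ≤ m →
    primesAux n w = primesAux m w := by
  intro n
  induction n with
  | zero =>
    intro m w hn _
    have : w = [] := List.length_eq_zero_iff.1 (by omega)
    subst this; rw [primesAux_nil, primesAux_nil]
  | succ n ih =>
    intro m w hn hm
    rcases eq_or_ne w [] with rfl | hw
    · rw [primesAux_nil, primesAux_nil]
    · cases m with
      | zero => exact absurd hm (by have := List.length_pos_iff.2 hw; omega)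
      | succ m =>
        rw [primesAux_cons n hw, primesAux_cons m hw]
        have h1 := firstRet_pos hw
        have h2 := firstRet_le w
        have hdrop : (w.drop (firstRet w)).length ≤ n := by
          rw [List.length_drop]; omega
        have hdrop2 : (w.drop (firstRet w)).length ≤ m := by
          rw [List.length_drop]; omega
        rw [ih m (w.drop (firstRet w)) hdrop hdrop2]

theorem primesL_cons {w : List Bool} (hw : w ≠ []) :
    primesL w = (w.take (firstRet w)) :: primesL (w.drop (firstRet w)) := by
  have hlen : 0 < w.length := List.length_pos_iff.2 hw
  obtain ⟨n, hn⟩ : ∃ n, w.length = n + 1 := ⟨w.length - 1, by omega⟩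
  rw [primesL, hn, primesAux_cons n hw, primesL]
  congr 1
  apply primesAux_fuel
  · have h1 := firstRet_pos hw
    rw [List.length_drop]; omega
  · exact le_rfl

theorem imbL_drop_of_bal {w : List Bool} (hbal : imbL w = 0) (k : ℕ)
    (hk : imbL (w.take k) = 0) : imbL (w.drop k) = 0 := by
  have := imbL_append (w.take k) (w.drop k)
  rw [List.take_append_drop] at this
  omega

theorem take_firstRet_prime {w : List Bool} (hw : w ≠ []) (hbal : imbL w = 0) :
    IsPrimeW (w.take (firstRet w)) := by
  have h1 := firstRet_pos hw
  have h2 := firstRet_le w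
  refine ⟨?_, ?_, ?_⟩
  · intro hc
    have h3 := List.length_pos_iff.2 hw
    have := congrArg List.length hc
    rw [List.length_take] at this
    simp only [List.length_nil] at this
    omega
  · exact firstRet_imb hw hbal
  · intro k hk1 hk2
    rw [List.length_take] at hk2
    rw [List.take_take, min_eq_left (by omega)]
    exact firstRet_min hk1 (by omega)

theorem prime_firstRet {p : List Bool} (hp : IsPrimeW p) : firstRet p = p.length := by
  obtain ⟨hne, hbal, hint⟩ := hp
  have h1 := firstRet_pos hne
  have h2 := firstRet_le p
  rcases eq_or_lt_of_le h2 with he | hlt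
  · exact he
  · exact absurd (firstRet_imb hne hbal) (hint _ h1 hlt)

theorem primesL_nil : primesL [] = [] := rfl

theorem primesL_of_prime {p : List Bool} (hp : IsPrimeW p) : primesL p = [p] := by
  rw [primesL_cons hp.1, prime_firstRet hp, List.take_length, List.drop_length, primesL,
    primesAux_nil]

theorem primesL_join : ∀ n (w : List Bool), w.length ≤ n → imbL w = 0 →
    (primesL w).flatten = w := by
  intro n
  induction n with
  | zero =>
    intro w hn _
    have : w = [] := List.length_eq_zero_iff.1 (by omega)
    subst this; rw [primesL, primesAux_nil]; rfl
  | succ n ih =>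
    intro w hn hbal
    rcases eq_or_ne w [] with rfl | hw
    · rw [primesL, primesAux_nil]; rfl
    · rw [primesL_cons hw, List.flatten_cons]
      have h1 := firstRet_pos hw
      have h2 := firstRet_le w
      rw [ih (w.drop (firstRet w)) (by rw [List.length_drop]; omega)
        (imbL_drop_of_bal hbal _ (firstRet_imb hw hbal))]
      exact List.take_append_drop _ _

theorem primesL_prime : ∀ n (w : List Bool), w.length ≤ n → imbL w = 0 →
    ∀ p ∈ primesL w, IsPrimeW p := by
  intro n
  induction n with
  | zero =>
    intro w hn _ p hp
    have : w = [] := List.length_eq_zero_iff.1 (by omega)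
    subst this; rw [primesL, primesAux_nil] at hp; simp at hp
  | succ n ih =>
    intro w hn hbal p hp
    rcases eq_or_ne w [] with rfl | hw
    · rw [primesL, primesAux_nil] at hp; simp at hp
    · rw [primesL_cons hw] at hp
      have h1 := firstRet_pos hw
      have h2 := firstRet_le w
      rcases List.mem_cons.1 hp with he | hm
      · rw [he]; exact take_firstRet_prime hw hbal
      · exact ih (w.drop (firstRet w)) (by rw [List.length_drop]; omega)
          (imbL_drop_of_bal hbal _ (firstRet_imb hw hbal)) p hm

theorem primesL_append {u : List Bool} (hu : imbL u = 0) (v : List Bool) :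
    ∀ n, u.length ≤ n → primesL (u ++ v) = primesL u ++ primesL v := by
  intro n
  induction n generalizing u with
  | zero =>
    intro hn
    have : u = [] := List.length_eq_zero_iff.1 (by omega)
    subst this
    simp [primesL_nil]
  | succ n ih =>
    intro hn
    rcases eq_or_ne u [] with rfl | hw
    · simp [primesL_nil]
    · have h1 := firstRet_pos hw
      have h2 := firstRet_le u
      have hne : u ++ v ≠ [] := by
        intro hc; exact hw (List.append_eq_nil_iff.1 hc).1
      rw [primesL_cons hne, primesL_cons hw, firstRet_append hu hw v,
        List.take_append_of_le_length h2, List.drop_append_of_le_length h2]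
      have hdbal : imbL (u.drop (firstRet u)) = 0 :=
        imbL_drop_of_bal hu _ (firstRet_imb hw hu)
      rw [ih hdbal (by rw [List.length_drop]; omega)]
      rfl

/-! ### the count of negative primes -/

def nuAux : ℤ → List Bool → ℕ
  | _, [] => 0
  | d, b :: w => (if d = 0 ∧ b = false then 1 else 0) + nuAux (d + (if b then 1 else -1)) w

def nuL (w : List Bool) : ℕ := nuAux 0 w

theorem nuAux_append (u v : List Bool) : ∀ d,
    nuAux d (u ++ v) = nuAux d u + nuAux (d + imbL u) v := by
  induction u with
  | nil => intro d; simp [nuAux, imbL_nil]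
  | cons b w ih =>
    intro d
    rw [List.cons_append, nuAux, nuAux, ih, imbL_cons]
    have e : d + (if b = true then (1:ℤ) else -1) + imbL w
        = d + ((if b = true then (1:ℤ) else -1) + imbL w) := by ring
    rw [e, add_assoc]

theorem nuL_append {u : List Bool} (hu : imbL u = 0) (v : List Bool) :
    nuL (u ++ v) = nuL u + nuL v := by
  rw [nuL, nuAux_append, hu, add_zero]; rfl

theorem nuL_flatten : ∀ l : List (List Bool), (∀ p ∈ l, imbL p = 0) →
    nuL l.flatten = (l.map nuL).sum := by
  intro l
  induction l with
  | nil => intro _; simp [nuL, nuAux]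
  | cons p l ih =>
    intro hb
    rw [List.flatten_cons, nuL_append (hb p (by simp)), List.map_cons, List.sum_cons,
      ih fun q hq => hb q (by simp [hq])]

theorem nuAux_eq_zero : ∀ (w : List Bool) (d : ℤ),
    (∀ i, ¬(d + imbL (w.take i) = 0 ∧ w.getD i true = false)) → nuAux d w = 0 := by
  intro w
  induction w with
  | nil => intro d _; rfl
  | cons b w ih =>
    intro d hcond
    rw [nuAux]
    have h0 : ¬(d = 0 ∧ b = false) := by
      have := hcond 0
      simpa [imbL_nil] using this
    rw [if_neg h0, zero_add]
    apply ih
    intro i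
    have := hcond (i + 1)
    simpa [List.take_cons, imbL_cons, add_comm, add_assoc, add_left_comm] using this

theorem take_ne_nil' {m : List Bool} {k : ℕ} (hk : 0 < k) (hlen : 0 < m.length) :
    m.take k ≠ [] := by
  intro hc
  have := congrArg List.length hc
  simp only [List.length_take, List.length_nil] at this
  omega

theorem take_ne_self {m : List Bool} {k : ℕ} (hlt : k < m.length) : m.take k ≠ m := by
  intro hc
  have := congrArg List.length hc
  simp only [List.length_take] at this
  omega

theorem minBal_length_ge {m : List Bool} (hm : MinBal m) : 2 ≤ m.length := by
  obtain ⟨hne, hbal, _⟩ := hm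
  cases m with
  | nil => simp at hne
  | cons b t =>
    cases t with
    | nil =>
      exfalso
      rw [imbL_single] at hbal
      cases b <;> simp at hbal
    | cons c s => simp

theorem minBal_head {m : List Bool} (hm : MinBal m) : m.getD 0 true = true := by
  have h2 := minBal_length_ge hm
  obtain ⟨hne, hbal, hpre⟩ := hm
  have hp : 0 < imbL (m.take 1) :=
    hpre _ (List.take_prefix 1 m) (take_ne_nil' one_pos (by omega)) (take_ne_self (by omega))
  cases m with
  | nil => simp at hne
  | cons b t =>
    cases b
    · rw [List.take_succ_cons, List.take_zero, imbL_single] at hp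
      norm_num at hp
    · rfl

theorem minBal_isPrime {m : List Bool} (hm : MinBal m) : IsPrimeW m := by
  obtain ⟨hne, hbal, hpre⟩ := hm
  refine ⟨hne, hbal, ?_⟩
  intro k hk1 hk2
  have hp : 0 < imbL (m.take k) :=
    hpre _ (List.take_prefix k m) (take_ne_nil' hk1 (by omega)) (take_ne_self hk2)
  omega

theorem minBal_nuL {m : List Bool} (hm : MinBal m) : nuL m = 0 := by
  have hhead := minBal_head hm
  obtain ⟨hne, hbal, hpre⟩ := hm
  apply nuAux_eq_zero
  intro i
  rintro ⟨hz, hget⟩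
  rw [zero_add] at hz
  rcases Nat.lt_or_ge i m.length with hi | hi
  · rcases Nat.eq_zero_or_pos i with rfl | hipos
    · rw [hhead] at hget; simp at hget
    · have : 0 < imbL (m.take i) :=
        hpre _ (List.take_prefix i m) (take_ne_nil' hipos (by omega)) (take_ne_self hi)
      omega
  · rw [List.getD_eq_default _ _ hi] at hget
    simp at hget

theorem prime_pos_minBal {p : List Bool} (hp : IsPrimeW p) (hh : p.getD 0 true = true) :
    MinBal p := by
  obtain ⟨hne, hbal, hint⟩ := hp
  refine ⟨hne, hbal, ?_⟩
  intro q hq hqne hqnp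
  set k := q.length with hq2
  have hq1 : q = p.take k := by
    obtain ⟨t, ht⟩ := hq
    rw [← ht, hq2, List.take_left]
  have hklen : k ≤ p.length := hq.length_le
  have hk1 : 0 < k := List.length_pos_iff.2 hqne
  have hklt : k < p.length := by
    rcases eq_or_lt_of_le hklen with he | h
    · exfalso
      apply hqnp
      rw [hq1, he, List.take_length]
    · exact h
  have hne0 : imbL (p.take k) ≠ 0 := hint k hk1 hklt
  have h1pos : 0 < imbL (p.take 1) := by
    cases p with
    | nil => simp at hne
    | cons b t =>
      have hb : b = true := hh
      subst hb
      rw [List.take_succ_cons, List.take_zero, imbL_single]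
      norm_num
  rw [hq1]
  rcases lt_or_gt_of_ne hne0 with hneg | hpos
  · exfalso
    rcases Nat.lt_or_ge 1 k with h1k | h1k
    · obtain ⟨j, hj1, hj2, hj3⟩ := ivt p (k - 1) 1 k (by omega) (by omega) h1pos hneg
      exact hint j (by omega) (by omega) hj3
    · have hk : k = 1 := by omega
      rw [hk] at hneg
      omega
  · exact hpos

theorem isPrime_map_not {p : List Bool} (hp : IsPrimeW p) : IsPrimeW (p.map not) := by
  obtain ⟨hne, hbal, hint⟩ := hp
  refine ⟨by simpa using hne, by rw [imbL_map_not, hbal]; ring, ?_⟩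
  intro k hk1 hk2
  rw [List.length_map] at hk2
  rw [← List.map_take, imbL_map_not]
  have := hint k hk1 hk2
  omega

theorem nuL_ge_one_of_neg_prime {p : List Bool} (hp : IsPrimeW p)
    (hh : p.getD 0 true = false) : 1 ≤ nuL p := by
  cases p with
  | nil => simp at hh
  | cons b t =>
    have hb : b = false := hh
    subst hb
    rw [nuL, nuAux, if_pos ⟨rfl, rfl⟩]
    omega

theorem map_not_map_not (w : List Bool) : (w.map not).map not = w := by
  have : (not ∘ not) = id := by
    funext b; cases b <;> rfl
  rw [List.map_map, this, List.map_id]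


/-! ### the algebra layer -/

section Algebra

variable (F : Type*) [Field F]

local notation "W" => FreeMonoid Bool
local notation "FA" => MonoidAlgebra F (FreeMonoid Bool)

/-- the monomial attached to a word -/
noncomputable def ofw (w : List Bool) : FA :=
  MonoidAlgebra.of F W (FreeMonoid.ofList w)

theorem ofw_eq_single (w : List Bool) :
    ofw F w = MonoidAlgebra.single (FreeMonoid.ofList w) 1 := rfl

/-- the image of a prime under the substitution `u ↦ u + ū`, `ū ↦ ū` -/
noncomputable def gp (p : List Bool) : FA :=
  if p.getD 0 true = true then ofw F p + ofw F (p.map not) else ofw F p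

/-- the image of a prime under the substitution `u ↦ u - ū`, `ū ↦ ū` -/
noncomputable def gm (p : List Bool) : FA :=
  if p.getD 0 true = true then ofw F p - ofw F (p.map not) else ofw F p

noncomputable def eEv (w : List Bool) : FA := ((primesL w).map (gp F)).prod

noncomputable def eEv' (w : List Bool) : FA := ((primesL w).map (gm F)).prod

noncomputable def Emap : FA →ₗ[F] FA :=
  (Finsupp.linearCombination F fun w : W => eEv F (FreeMonoid.toList w)) ∘ₗ
    (MonoidAlgebra.coeffLinearEquiv F).toLinearMap

noncomputable def Emap' : FA →ₗ[F] FA :=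
  (Finsupp.linearCombination F fun w : W => eEv' F (FreeMonoid.toList w)) ∘ₗ
    (MonoidAlgebra.coeffLinearEquiv F).toLinearMap

theorem Emap_single (w : W) (c : F) :
    Emap F (MonoidAlgebra.single w c) = c • eEv F (FreeMonoid.toList w) := by
  rw [Emap, LinearMap.comp_apply]; exact Finsupp.linearCombination_single _ _ _

theorem Emap'_single (w : W) (c : F) :
    Emap' F (MonoidAlgebra.single w c) = c • eEv' F (FreeMonoid.toList w) := by
  rw [Emap', LinearMap.comp_apply]; exact Finsupp.linearCombination_single _ _ _

theorem eEv_nil : eEv F [] = 1 := by rw [eEv, primesL_nil]; rfl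
theorem eEv'_nil : eEv' F [] = 1 := by rw [eEv', primesL_nil]; rfl

theorem eEv_append {u : List Bool} (hu : imbL u = 0) (v : List Bool) :
    eEv F (u ++ v) = eEv F u * eEv F v := by
  rw [eEv, eEv, eEv, primesL_append hu v u.length le_rfl, List.map_append, List.prod_append]

theorem eEv'_append {u : List Bool} (hu : imbL u = 0) (v : List Bool) :
    eEv' F (u ++ v) = eEv' F u * eEv' F v := by
  rw [eEv', eEv', eEv', primesL_append hu v u.length le_rfl, List.map_append, List.prod_append]

/-- multiplicativity of the substitution maps on balanced-supported elements -/
theorem Emap_gen_mul (e : List Bool → FA)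
    (he1 : e [] = 1) (he2 : ∀ {u : List Bool}, imbL u = 0 → ∀ v, e (u ++ v) = e u * e v)
    (p q : FA)
    (hp : ∀ w ∈ p.coeff.support, imbL (FreeMonoid.toList w) = 0) :
    (Finsupp.linearCombination F fun w : W => e (FreeMonoid.toList w)) (p * q).coeff =
      (Finsupp.linearCombination F fun w : W => e (FreeMonoid.toList w)) p.coeff *
      (Finsupp.linearCombination F fun w : W => e (FreeMonoid.toList w)) q.coeff := by
  classical
  set T := Finsupp.linearCombination F fun w : W => e (FreeMonoid.toList w) with hT
  rw [MonoidAlgebra.mul_def, MonoidAlgebra.coeff_finsuppSum, map_finsuppSum]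
  rw [show T p.coeff = p.coeff.sum fun a c => c • e (FreeMonoid.toList a) from
    Finsupp.linearCombination_apply _ _]
  rw [Finsupp.sum_mul]
  apply Finsupp.sum_congr
  intro a₁ ha₁
  rw [MonoidAlgebra.coeff_finsuppSum, map_finsuppSum]
  rw [show T q.coeff = q.coeff.sum fun a c => c • e (FreeMonoid.toList a) from
    Finsupp.linearCombination_apply _ _]
  rw [Finsupp.mul_sum]
  apply Finsupp.sum_congr
  intro a₂ ha₂
  rw [hT, MonoidAlgebra.coeff_single, Finsupp.linearCombination_single, FreeMonoid.toList_mul,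
    he2 (hp a₁ ha₁) (FreeMonoid.toList a₂), smul_mul_smul_comm]


theorem Emap_mul (p q : FA) (hp : ∀ w ∈ p.coeff.support, imbL (FreeMonoid.toList w) = 0) :
    Emap F (p * q) = Emap F p * Emap F q :=
  Emap_gen_mul F (eEv F) (eEv_nil F) (fun hu v => eEv_append F hu v) p q hp

theorem Emap'_mul (p q : FA) (hp : ∀ w ∈ p.coeff.support, imbL (FreeMonoid.toList w) = 0) :
    Emap' F (p * q) = Emap' F p * Emap' F q :=
  Emap_gen_mul F (eEv' F) (eEv'_nil F) (fun hu v => eEv'_append F hu v) p q hp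

theorem head_map_not {p : List Bool} (hp : p ≠ []) :
    (p.map not).getD 0 true = !(p.getD 0 true) := by
  cases p with
  | nil => exact absurd rfl hp
  | cons b t => rfl

theorem supp_gp (p : List Bool) : ∀ x ∈ (gp F p).coeff.support,
    x = FreeMonoid.ofList p ∨ x = FreeMonoid.ofList (p.map not) := by
  intro x hx
  rw [gp] at hx
  split at hx
  · rcases Finset.mem_union.1 (Finsupp.support_add hx) with hx | hx
    · exact Or.inl (Finset.mem_singleton.1 (Finsupp.support_single_subset hx))
    · exact Or.inr (Finset.mem_singleton.1 (Finsupp.support_single_subset hx))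
  · exact Or.inl (Finset.mem_singleton.1 (Finsupp.support_single_subset hx))

theorem supp_gm (p : List Bool) : ∀ x ∈ (gm F p).coeff.support,
    x = FreeMonoid.ofList p ∨ x = FreeMonoid.ofList (p.map not) := by
  intro x hx
  rw [gm] at hx
  split at hx
  · rcases Finset.mem_union.1 (Finsupp.support_sub hx) with hx | hx
    · exact Or.inl (Finset.mem_singleton.1 (Finsupp.support_single_subset hx))
    · exact Or.inr (Finset.mem_singleton.1 (Finsupp.support_single_subset hx))
  · exact Or.inl (Finset.mem_singleton.1 (Finsupp.support_single_subset hx))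

theorem supp_prod_bal (gf : List Bool → FA)
    (hg : ∀ p, ∀ x ∈ (gf p).coeff.support, x = FreeMonoid.ofList p ∨ x = FreeMonoid.ofList (p.map not)) :
    ∀ l : List (List Bool), (∀ p ∈ l, imbL p = 0) →
    ∀ x ∈ ((l.map gf).prod).coeff.support, imbL (FreeMonoid.toList x) = 0 := by
  intro l
  induction l with
  | nil =>
    intro _ x hx
    rw [List.map_nil, List.prod_nil] at hx
    have h1 : (1 : FA) = MonoidAlgebra.single 1 1 := rfl
    rw [h1] at hx
    have hx1 : x = 1 := by simpa using Finsupp.support_single_subset hx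
    rw [hx1, FreeMonoid.toList_one, imbL_nil]
  | cons p l ih =>
    intro hbal x hx
    rw [List.map_cons, List.prod_cons] at hx
    obtain ⟨u, hu, v, hv, huv⟩ := Finset.mem_mul.1 (MonoidAlgebra.support_coeff_mul_subset _ _ hx)
    have hpbal : imbL p = 0 := hbal p (by simp)
    have hubal : imbL (FreeMonoid.toList u) = 0 := by
      rcases hg p u hu with he | he
      · rw [he, FreeMonoid.toList_ofList]; exact hpbal
      · rw [he, FreeMonoid.toList_ofList, imbL_map_not, hpbal]; ring
    have hvbal := ih (fun q hq => hbal q (by simp [hq])) v hv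
    rw [← huv, FreeMonoid.toList_mul, imbL_append, hubal, hvbal]
    ring

theorem supp_Emap'_bal (p : FA) (hp : ∀ w ∈ p.coeff.support, imbL (FreeMonoid.toList w) = 0) :
    ∀ x ∈ (Emap' F p).coeff.support, imbL (FreeMonoid.toList x) = 0 := by
  classical
  intro x hx
  rw [show Emap' F p = p.coeff.sum fun a c => c • eEv' F (FreeMonoid.toList a) from
    Finsupp.linearCombination_apply _ _] at hx
  rw [MonoidAlgebra.coeff_finsuppSum] at hx
  obtain ⟨w, hw, hx2⟩ := Finset.mem_biUnion.1 (Finsupp.support_sum hx)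
  have hx3 : x ∈ (eEv' F (FreeMonoid.toList w)).coeff.support := Finsupp.support_smul hx2
  refine supp_prod_bal F (gm F) (supp_gm F) _ ?_ x hx3
  intro q hq
  exact (primesL_prime _ _ le_rfl (hp w hw) q hq).2.1

theorem ofw_mul (u v : List Bool) : ofw F u * ofw F v = ofw F (u ++ v) := by
  rw [ofw, ofw, ofw, ← map_mul]
  rfl

theorem Emap_ofw (w : List Bool) : Emap F (ofw F w) = eEv F w := by
  rw [ofw_eq_single, Emap_single, FreeMonoid.toList_ofList, one_smul]

theorem Emap'_ofw (w : List Bool) : Emap' F (ofw F w) = eEv' F w := by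
  rw [ofw_eq_single, Emap'_single, FreeMonoid.toList_ofList, one_smul]

theorem eEv_prime {p : List Bool} (hp : IsPrimeW p) : eEv F p = gp F p := by
  rw [eEv, primesL_of_prime hp, List.map_cons, List.map_nil, List.prod_cons, List.prod_nil,
    mul_one]

theorem eEv'_prime {p : List Bool} (hp : IsPrimeW p) : eEv' F p = gm F p := by
  rw [eEv', primesL_of_prime hp, List.map_cons, List.map_nil, List.prod_cons, List.prod_nil,
    mul_one]

theorem Emap_gm {p : List Bool} (hp : IsPrimeW p) : Emap F (gm F p) = ofw F p := by
  rcases hb : p.getD 0 true with hfalse | htrue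
  · rw [gm, if_neg (by rw [hb]; simp), Emap_ofw, eEv_prime F hp, gp, if_neg (by rw [hb]; simp)]
  · rw [gm, if_pos hb, map_sub, Emap_ofw, Emap_ofw, eEv_prime F hp,
      eEv_prime F (isPrime_map_not hp), gp, if_pos hb, gp,
      if_neg (by rw [head_map_not hp.1, hb]; simp)]
    abel

theorem Emap_prod_gm (l : List (List Bool)) (hl : ∀ p ∈ l, IsPrimeW p) :
    Emap F ((l.map (gm F)).prod) = ofw F l.flatten := by
  induction l with
  | nil =>
    rw [List.map_nil, List.prod_nil, List.flatten_nil]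
    rw [show (1 : FA) = MonoidAlgebra.single 1 1 from rfl, Emap_single, FreeMonoid.toList_one, eEv_nil,
      one_smul]
    rfl
  | cons p l ih =>
    rw [List.map_cons, List.prod_cons, List.flatten_cons]
    have hp := hl p (by simp)
    rw [Emap_mul F _ _ ?hbal, Emap_gm F hp, ih fun q hq => hl q (by simp [hq]), ofw_mul]
    case hbal =>
      intro w hw
      rcases supp_gm F p w hw with he | he
      · rw [he, FreeMonoid.toList_ofList]; exact hp.2.1
      · rw [he, FreeMonoid.toList_ofList, imbL_map_not, hp.2.1]; ring

theorem Emap_Emap' (p : FA) (hp : ∀ w ∈ p.coeff.support, imbL (FreeMonoid.toList w) = 0) :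
    Emap F (Emap' F p) = p := by
  classical
  rw [show Emap' F p = p.coeff.sum fun a c => c • eEv' F (FreeMonoid.toList a) from
    Finsupp.linearCombination_apply _ _]
  rw [map_finsuppSum]
  have : ∀ w ∈ p.coeff.support, Emap F (p.coeff w • eEv' F (FreeMonoid.toList w)) = MonoidAlgebra.single w (p.coeff w) := by
    intro w hw
    rw [map_smul, eEv', Emap_prod_gm F _ (primesL_prime _ _ le_rfl (hp w hw)),
      primesL_join _ _ le_rfl (hp w hw), ofw_eq_single, FreeMonoid.ofList_toList,
      MonoidAlgebra.smul_single, smul_eq_mul, mul_one]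
  rw [Finsupp.sum_congr this, MonoidAlgebra.sum_coeff_single]

/-! ### the swap homomorphism -/

noncomputable def swA : FA →ₐ[F] FA :=
  MonoidAlgebra.lift F FA W ((MonoidAlgebra.of F W).comp (FreeMonoid.map not))

theorem swA_of (x : W) : swA F (MonoidAlgebra.of F W x) = MonoidAlgebra.of F W (FreeMonoid.map not x) := by
  rw [swA, MonoidAlgebra.lift_of]
  rfl

theorem map_not_ofList (m : List Bool) :
    FreeMonoid.map not (FreeMonoid.ofList m) = FreeMonoid.ofList (m.map not) := rfl

theorem swA_single (x : W) (c : F) :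
    swA F (MonoidAlgebra.single x c) = MonoidAlgebra.single (FreeMonoid.map not x) c := by
  have h1 : (MonoidAlgebra.single x c : FA) = c • MonoidAlgebra.single x 1 := by
    rw [MonoidAlgebra.smul_single', mul_one]
  rw [h1, map_smul, show (MonoidAlgebra.single x 1 : FA) = MonoidAlgebra.of F W x from rfl, swA_of,
    show (MonoidAlgebra.of F W (FreeMonoid.map not x) : FA)
      = MonoidAlgebra.single (FreeMonoid.map not x) 1 from rfl,
    MonoidAlgebra.smul_single', mul_one]

theorem swA_eq_mapDomain (p : FA) :
    swA F p = MonoidAlgebra.mapDomain (FreeMonoid.map not) p := by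
  induction p using MonoidAlgebra.induction_linear with
  | zero => rw [map_zero, MonoidAlgebra.mapDomain_zero]
  | add f g hf hg => rw [map_add, MonoidAlgebra.mapDomain_add, hf, hg]
  | single a b => rw [swA_single, MonoidAlgebra.mapDomain_single]

theorem swA_supp {p : FA} {x : W} (hx : x ∈ (swA F p).coeff.support) :
    ∃ w ∈ p.coeff.support, FreeMonoid.map not w = x := by
  classical
  rw [swA_eq_mapDomain] at hx
  have := Finsupp.mapDomain_support hx
  obtain ⟨w, hw, he⟩ := Finset.mem_image.1 this
  exact ⟨w, hw, he⟩

theorem swA_fix {f : FA} (hf : f ∈ bergmanC F) : swA F f = f := by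
  induction hf using Algebra.adjoin_induction with
  | mem x hx =>
    obtain ⟨m, hm, rfl⟩ := hx
    rw [map_add, swA_of, swA_of, map_not_ofList, map_not_ofList, map_not_map_not]
    exact add_comm _ _
  | algebraMap r => exact AlgHom.commutes _ r
  | add x y hx hy ihx ihy => rw [map_add, ihx, ihy]
  | mul x y hx hy ihx ihy => rw [map_mul, ihx, ihy]

/-! ### elements of C and their supports -/

theorem eEv'_minBal {m : List Bool} (hm : MinBal m) :
    eEv' F m + eEv' F (m.map not) = ofw F m := by
  have hp := minBal_isPrime hm
  have hh := minBal_head hm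
  rw [eEv'_prime F hp, eEv'_prime F (isPrime_map_not hp), gm, if_pos hh, gm,
    if_neg (by rw [head_map_not hp.1, hh]; simp)]
  abel

theorem bergmanC_supp {f : MonoidAlgebra F (FreeMonoid Bool)} (hf : f ∈ bergmanC F) :
    (∀ w ∈ f.coeff.support, imbL (FreeMonoid.toList w) = 0) ∧
    (∀ x ∈ (Emap' F f).coeff.support,
      imbL (FreeMonoid.toList x) = 0 ∧ nuL (FreeMonoid.toList x) = 0) := by
  classical
  induction hf using Algebra.adjoin_induction with
  | mem x hx =>
    obtain ⟨m, hm, rfl⟩ := hx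
    have hsum : MonoidAlgebra.of F W (FreeMonoid.ofList m) +
        MonoidAlgebra.of F W (FreeMonoid.ofList (m.map not)) = ofw F m + ofw F (m.map not) := rfl
    constructor
    · intro w hw
      rw [hsum] at hw
      rcases Finset.mem_union.1 (Finsupp.support_add hw) with hw | hw
      · have := Finsupp.support_single_subset hw
        simp only [Finset.mem_singleton] at this
        rw [this, FreeMonoid.toList_ofList]
        exact hm.2.1
      · have := Finsupp.support_single_subset hw
        simp only [Finset.mem_singleton] at this
        rw [this, FreeMonoid.toList_ofList, imbL_map_not, hm.2.1]
        ring
    · intro x hx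
      rw [hsum, map_add, Emap'_ofw, Emap'_ofw, eEv'_minBal F hm] at hx
      rw [ofw_eq_single] at hx
      have := Finsupp.support_single_subset hx
      simp only [Finset.mem_singleton] at this
      rw [this, FreeMonoid.toList_ofList]
      exact ⟨hm.2.1, minBal_nuL hm⟩
  | algebraMap r =>
    have halg : (algebraMap F FA) r = MonoidAlgebra.single 1 r := rfl
    constructor
    · intro w hw
      rw [halg] at hw
      have := Finsupp.support_single_subset hw
      simp only [Finset.mem_singleton] at this
      rw [this, FreeMonoid.toList_one, imbL_nil]
    · intro x hx
      rw [halg, Emap'_single, FreeMonoid.toList_one, eEv'_nil] at hx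
      have hx2 : x ∈ (MonoidAlgebra.single (1 : W) r).coeff.support := by
        rwa [show r • (1 : FA) = MonoidAlgebra.single 1 r by
          rw [show (1 : FA) = MonoidAlgebra.single 1 1 from rfl, MonoidAlgebra.smul_single', mul_one]]
          at hx
      have := Finsupp.support_single_subset hx2
      simp only [Finset.mem_singleton] at this
      rw [this, FreeMonoid.toList_one]
      exact ⟨imbL_nil, rfl⟩
  | add x y hx hy ihx ihy =>
    constructor
    · intro w hw
      rcases Finset.mem_union.1 (Finsupp.support_add hw) with hw | hw
      · exact ihx.1 w hw
      · exact ihy.1 w hw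
    · intro z hz
      rw [map_add] at hz
      rcases Finset.mem_union.1 (Finsupp.support_add hz) with hz | hz
      · exact ihx.2 z hz
      · exact ihy.2 z hz
  | mul x y hx hy ihx ihy =>
    constructor
    · intro w hw
      obtain ⟨u, hu, v, hv, huv⟩ := Finset.mem_mul.1 (MonoidAlgebra.support_coeff_mul_subset _ _ hw)
      rw [← huv, FreeMonoid.toList_mul, imbL_append, ihx.1 u hu, ihy.1 v hv]
      ring
    · intro z hz
      rw [Emap'_mul F x y ihx.1] at hz
      obtain ⟨u, hu, v, hv, huv⟩ := Finset.mem_mul.1 (MonoidAlgebra.support_coeff_mul_subset _ _ hz)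
      obtain ⟨hu1, hu2⟩ := ihx.2 u hu
      obtain ⟨hv1, hv2⟩ := ihy.2 v hv
      constructor
      · rw [← huv, FreeMonoid.toList_mul, imbL_append, hu1, hv1]; ring
      · rw [← huv, FreeMonoid.toList_mul, nuL_append hu1, hu2, hv2]

theorem Emap_mem_bergmanC (p : MonoidAlgebra F (FreeMonoid Bool))
    (hp : ∀ w ∈ p.coeff.support, imbL (FreeMonoid.toList w) = 0 ∧ nuL (FreeMonoid.toList w) = 0) :
    Emap F p ∈ bergmanC F := by
  classical
  rw [show Emap F p = p.coeff.sum fun a c => c • eEv F (FreeMonoid.toList a) from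
    Finsupp.linearCombination_apply _ _, Finsupp.sum]
  apply sum_mem
  intro w hw
  apply Subalgebra.smul_mem
  obtain ⟨hbal, hnu⟩ := hp w hw
  rw [eEv]
  apply list_prod_mem
  intro g hg
  obtain ⟨q, hq, rfl⟩ := List.mem_map.1 hg
  have hqprime : IsPrimeW q := primesL_prime _ _ le_rfl hbal q hq
  have hqbal_all : ∀ r ∈ primesL (FreeMonoid.toList w), imbL r = 0 := fun r hr =>
    (primesL_prime _ _ le_rfl hbal r hr).2.1
  have hnu_sum : ((primesL (FreeMonoid.toList w)).map nuL).sum = 0 := by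
    rw [← nuL_flatten _ hqbal_all, primesL_join _ _ le_rfl hbal, hnu]
  have hqnu : nuL q = 0 := by
    have : ∀ n ∈ (primesL (FreeMonoid.toList w)).map nuL, n = 0 :=
      List.sum_eq_zero_iff.1 hnu_sum
    exact this (nuL q) (List.mem_map.2 ⟨q, hq, rfl⟩)
  have hqhead : q.getD 0 true = true := by
    rcases hh : q.getD 0 true with h | h
    · exfalso
      have := nuL_ge_one_of_neg_prime hqprime hh
      omega
    · rfl
  have hqmin : MinBal q := prime_pos_minBal hqprime hqhead
  rw [gp, if_pos hqhead]
  apply Algebra.subset_adjoin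
  exact ⟨q, hqmin, rfl⟩

def bstep (n : ℕ) (b : Bool) : ℕ := 2 * n + (if b then 1 else 0)

def valL (w : List Bool) : ℕ := w.foldl bstep 0

def numL (w : List Bool) : ℕ := w.foldl bstep 1

theorem foldl_shift (w : List Bool) : ∀ a : ℕ,
    w.foldl bstep a = a * 2 ^ w.length + valL w := by
  induction w with
  | nil => intro a; simp [valL]
  | cons b w ih =>
    intro a
    simp only [List.foldl_cons, List.length_cons]
    rw [ih (bstep a b), show valL (b :: w) = (b::w).foldl bstep 0 from rfl,
      List.foldl_cons, ih (bstep 0 b)]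
    cases b <;> simp [bstep] <;> ring

theorem valL_lt (w : List Bool) : valL w < 2 ^ w.length := by
  induction w with
  | nil => simp [valL]
  | cons b w ih =>
    have : valL (b :: w) = bstep 0 b * 2 ^ w.length + valL w := by
      rw [show valL (b :: w) = (b::w).foldl bstep 0 from rfl, List.foldl_cons, foldl_shift]
    rw [this, List.length_cons]
    have : bstep 0 b ≤ 1 := by cases b <;> simp [bstep]
    have h2 : (2:ℕ) ^ (w.length + 1) = 2 ^ w.length + 2 ^ w.length := by ring
    nlinarith

theorem numL_eq (w : List Bool) : numL w = 2 ^ w.length + valL w := by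
  rw [numL, foldl_shift]; ring

theorem numL_append (u v : List Bool) : numL (u ++ v) = numL u * 2 ^ v.length + valL v := by
  rw [numL, List.foldl_append, ← numL, foldl_shift]

theorem numL_pos (w : List Bool) : 1 ≤ numL w := by
  have : 0 < 2 ^ w.length := Nat.pow_pos (by norm_num)
  rw [numL_eq]; omega

theorem numL_lt_of_length_lt {u v : List Bool} (h : u.length < v.length) : numL u < numL v := by
  rw [numL_eq, numL_eq]
  have h1 := valL_lt u
  have h2 : 2 ^ (u.length + 1) ≤ 2 ^ v.length := Nat.pow_le_pow_right (by norm_num) h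
  have h3 : (2:ℕ) ^ (u.length + 1) = 2 ^ u.length + 2 ^ u.length := by ring
  have h4 : (0:ℕ) ≤ valL v := Nat.zero_le _
  omega

theorem length_le_of_numL_le {u v : List Bool} (h : numL u ≤ numL v) : u.length ≤ v.length := by
  by_contra hc
  exact absurd h (by simpa using (numL_lt_of_length_lt (by omega)).not_ge)

theorem numL_append_lt_right {u v : List Bool} (h : numL u < numL v) (w : List Bool) :
    numL (u ++ w) < numL (v ++ w) := by
  rw [numL_append, numL_append]
  have h2 : 0 < 2 ^ w.length := Nat.pow_pos (by norm_num)
  have := Nat.mul_lt_mul_of_pos_right h h2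
  omega

theorem numL_append_lt_left {u v : List Bool} (h : numL u < numL v) (w : List Bool) :
    numL (w ++ u) < numL (w ++ v) := by
  rw [numL_append, numL_append]
  have hle : u.length ≤ v.length := length_le_of_numL_le h.le
  rcases Nat.lt_or_ge u.length v.length with hl | hl
  · have h1 := valL_lt u
    have hw1 := numL_pos w
    have h3 : numL w * 2 ^ u.length + valL u < numL w * 2 ^ (u.length + 1) := by
      have e : numL w * 2 ^ (u.length+1) = numL w * 2 ^ u.length + numL w * 2 ^ u.length := by ring
      nlinarith
    have h4 : numL w * 2 ^ (u.length + 1) ≤ numL w * 2 ^ v.length :=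
      Nat.mul_le_mul_left _ (Nat.pow_le_pow_right (by norm_num) (by omega))
    have h5 : (0:ℕ) ≤ valL v := Nat.zero_le _
    omega
  · have hlen : u.length = v.length := le_antisymm hle hl
    have : valL u < valL v := by
      rw [numL_eq, numL_eq, hlen] at h; omega
    rw [hlen]; omega

theorem numL_inj : ∀ {u v : List Bool}, numL u = numL v → u = v := by
  intro u
  induction u with
  | nil =>
    intro v h
    cases v with
    | nil => rfl
    | cons b w =>
      exfalso
      have := numL_lt_of_length_lt (u := []) (v := b :: w) (by simp)
      omega
  | cons a u ih =>
    intro v h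
    cases v with
    | nil =>
      exfalso
      have := numL_lt_of_length_lt (u := []) (v := a :: u) (by simp)
      omega
    | cons b w =>
      have h1 := length_le_of_numL_le h.le
      have h2 := length_le_of_numL_le h.ge
      simp only [List.length_cons] at h1 h2
      have hlen : u.length = w.length := by omega
      have e1 : numL (a :: u) = (2 + (if a then 1 else 0)) * 2 ^ u.length + valL u := by
        rw [numL, List.foldl_cons, foldl_shift]; cases a <;> simp [bstep] <;> ring
      have e2 : numL (b :: w) = (2 + (if b then 1 else 0)) * 2 ^ w.length + valL w := by
        rw [numL, List.foldl_cons, foldl_shift]; cases b <;> simp [bstep] <;> ring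
      have hu := valL_lt u
      have hw := valL_lt w
      rw [hlen] at hu
      rw [e1, e2, hlen] at h
      cases a <;> cases b <;> norm_num at h
      · have : valL u = valL w := by omega
        have : u = w := ih (by rw [numL_eq, numL_eq, hlen, this])
        rw [this]
      · exfalso; omega
      · exfalso; omega
      · have : valL u = valL w := by omega
        have : u = w := ih (by rw [numL_eq, numL_eq, hlen, this])
        rw [this]

theorem KL {F : Type*} [Field F] {κ : Type*} [LinearOrder κ]
    (R : FreeMonoid Bool → κ) (S : Set (FreeMonoid Bool))
    (hmono : ∀ {u v w}, u ∈ S → v ∈ S → w ∈ S →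
      R u < R v → R (u * w) < R (v * w) ∧ R (w * u) < R (w * v))
    (hinj : ∀ {u v}, u ∈ S → v ∈ S → R u = R v → u = v)
    (p q : MonoidAlgebra F (FreeMonoid Bool)) (hp : p ≠ 0) (hq : q ≠ 0)
    (hps : ∀ w ∈ p.coeff.support, w ∈ S) (hqs : ∀ w ∈ q.coeff.support, w ∈ S) :
    ∃ a ∈ p.coeff.support, ∃ b ∈ q.coeff.support,
      (∀ a' ∈ p.coeff.support, R a' ≤ R a) ∧ (∀ b' ∈ q.coeff.support, R b' ≤ R b) ∧
      a * b ∈ (p * q).coeff.support ∧ ∀ w ∈ (p * q).coeff.support, R w ≤ R (a * b) := by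
  classical
  have hpn : p.coeff.support.Nonempty := Finsupp.support_nonempty_iff.2 (mt MonoidAlgebra.coeff_eq_zero.1 hp)
  have hqn : q.coeff.support.Nonempty := Finsupp.support_nonempty_iff.2 (mt MonoidAlgebra.coeff_eq_zero.1 hq)
  obtain ⟨a, ha, hamax⟩ : ∃ a ∈ p.coeff.support, ∀ a' ∈ p.coeff.support, R a' ≤ R a := by
    obtain ⟨a, ha, hmax⟩ := p.coeff.support.exists_max_image R hpn
    exact ⟨a, ha, hmax⟩
  obtain ⟨b, hb, hbmax⟩ : ∃ b ∈ q.coeff.support, ∀ b' ∈ q.coeff.support, R b' ≤ R b := by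
    obtain ⟨b, hb, hmax⟩ := q.coeff.support.exists_max_image R hqn
    exact ⟨b, hb, hmax⟩
  have haS : a ∈ S := hps a ha
  have hbS : b ∈ S := hqs b hb
  -- the "≤" transport
  have hle : ∀ {u v}, u ∈ S → v ∈ S → R u ≤ R a → R v ≤ R b → R (u * v) ≤ R (a * b) := by
    intro u v hu hv h1 h2
    have hub : R (u * b) ≤ R (a * b) := by
      rcases lt_or_eq_of_le h1 with h1 | h1
      · exact le_of_lt (hmono hu haS hbS h1).1
      · rw [hinj hu haS h1]
    rcases lt_or_eq_of_le h2 with h2 | h2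
    · exact le_of_lt ((hmono hv hbS hu h2).2.trans_le hub)
    · rw [hinj hv hbS h2]; exact hub
  -- uniqueness of the top splitting
  have huniq : ∀ u ∈ p.coeff.support, ∀ v ∈ q.coeff.support, u * v = a * b → u = a ∧ v = b := by
    intro u hu v hv huv
    have huS := hps u hu; have hvS := hqs v hv
    have h1 : R u ≤ R a := hamax u hu
    have h2 : R v ≤ R b := hbmax v hv
    have hu_eq : u = a := by
      rcases lt_or_eq_of_le h1 with h1 | h1
      · exfalso
        have step1 : R (u * v) < R (a * v) := (hmono huS haS hvS h1).1
        have step2 : R (a * v) ≤ R (a * b) := by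
          rcases lt_or_eq_of_le h2 with h2 | h2
          · exact le_of_lt (hmono hvS hbS haS h2).2
          · rw [hinj hvS hbS h2]
        rw [huv] at step1
        exact absurd (step1.trans_le step2) (lt_irrefl _)
      · exact hinj huS haS h1
    subst hu_eq
    refine ⟨rfl, ?_⟩
    rcases lt_or_eq_of_le h2 with h2 | h2
    · exfalso
      have := (hmono hvS hbS huS h2).2
      rw [huv] at this
      exact absurd this (lt_irrefl _)
    · exact hinj hvS hbS h2
  -- the coefficient at a*b
  have hcoeff : (p * q).coeff (a * b) = p.coeff a * q.coeff b := by
    rw [MonoidAlgebra.coeff_mul]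
    unfold Finsupp.sum
    rw [Finset.sum_eq_single_of_mem a ha]
    · simp only []
      rw [Finset.sum_eq_single_of_mem b hb]
      · simp
      · intro v hv hvb
        exact if_neg (fun hc => hvb (huniq a ha v hv hc).2)
    · intro u hu hua
      exact Finset.sum_eq_zero fun v hv =>
        if_neg (fun hc => hua (huniq u hu v hv hc).1)
  have hmem : a * b ∈ (p * q).coeff.support := by
    rw [Finsupp.mem_support_iff, hcoeff]
    exact mul_ne_zero (Finsupp.mem_support_iff.1 ha) (Finsupp.mem_support_iff.1 hb)
  refine ⟨a, ha, b, hb, hamax, hbmax, hmem, ?_⟩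
  intro w hw
  obtain ⟨u, hu, v, hv, huv⟩ := Finset.mem_mul.1 (MonoidAlgebra.support_coeff_mul_subset p q hw)
  rw [← huv]
  exact hle (hps u hu) (hqs v hv) (hamax u hu) (hbmax v hv)


/-! ### the rank functions for leading-term arguments -/

noncomputable def RnumF : W → ℕ := fun w => numL (FreeMonoid.toList w)

noncomputable def RimbPF : W → ℤ ×ₗ ℕ :=
  fun w => toLex (imbL (FreeMonoid.toList w), numL (FreeMonoid.toList w))

noncomputable def RimbMF : W → ℤ ×ₗ ℕ :=
  fun w => toLex (-imbL (FreeMonoid.toList w), numL (FreeMonoid.toList w))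

noncomputable def RnuF : W → ℕ ×ₗ ℕ :=
  fun w => toLex (nuL (FreeMonoid.toList w), numL (FreeMonoid.toList w))

theorem toList_mul' (u v : W) :
    FreeMonoid.toList (u * v) = FreeMonoid.toList u ++ FreeMonoid.toList v := rfl

theorem Rnum_mono {u v : W} (hlt : RnumF u < RnumF v) (w : W) :
    RnumF (u * w) < RnumF (v * w) ∧ RnumF (w * u) < RnumF (w * v) := by
  constructor
  · show numL _ < numL _
    rw [toList_mul', toList_mul']
    exact numL_append_lt_right hlt _
  · show numL _ < numL _
    rw [toList_mul', toList_mul']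
    exact numL_append_lt_left hlt _

theorem Rnum_inj {u v : W} (hlt : RnumF u = RnumF v) : u = v := by
  have h := numL_inj hlt
  exact FreeMonoid.toList.injective h

theorem RimbP_mono {u v : W} (hlt : RimbPF u < RimbPF v) (w : W) :
    RimbPF (u * w) < RimbPF (v * w) ∧ RimbPF (w * u) < RimbPF (w * v) := by
  simp only [RimbPF] at hlt ⊢
  rw [Prod.Lex.lt_iff, ofLex_toLex, ofLex_toLex] at hlt
  constructor
  · rw [Prod.Lex.lt_iff, ofLex_toLex, ofLex_toLex]
    simp only [toList_mul', imbL_append]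
    rcases hlt with h | ⟨h1, h2⟩
    · exact Or.inl (by omega)
    · exact Or.inr ⟨by omega, numL_append_lt_right h2 _⟩
  · rw [Prod.Lex.lt_iff, ofLex_toLex, ofLex_toLex]
    simp only [toList_mul', imbL_append]
    rcases hlt with h | ⟨h1, h2⟩
    · exact Or.inl (by omega)
    · exact Or.inr ⟨by omega, numL_append_lt_left h2 _⟩

theorem RimbP_inj {u v : W} (hlt : RimbPF u = RimbPF v) : u = v := by
  have h := toLex.injective hlt
  exact Rnum_inj (congrArg Prod.snd h)

theorem RimbM_mono {u v : W} (hlt : RimbMF u < RimbMF v) (w : W) :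
    RimbMF (u * w) < RimbMF (v * w) ∧ RimbMF (w * u) < RimbMF (w * v) := by
  simp only [RimbMF] at hlt ⊢
  rw [Prod.Lex.lt_iff, ofLex_toLex, ofLex_toLex] at hlt
  constructor
  · rw [Prod.Lex.lt_iff, ofLex_toLex, ofLex_toLex]
    simp only [toList_mul', imbL_append]
    rcases hlt with h | ⟨h1, h2⟩
    · exact Or.inl (by omega)
    · exact Or.inr ⟨by omega, numL_append_lt_right h2 _⟩
  · rw [Prod.Lex.lt_iff, ofLex_toLex, ofLex_toLex]
    simp only [toList_mul', imbL_append]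
    rcases hlt with h | ⟨h1, h2⟩
    · exact Or.inl (by omega)
    · exact Or.inr ⟨by omega, numL_append_lt_left h2 _⟩

theorem RimbM_inj {u v : W} (hlt : RimbMF u = RimbMF v) : u = v := by
  have h := toLex.injective hlt
  exact Rnum_inj (congrArg Prod.snd h)

theorem RnuF_mono {u v w : W} (hu : imbL (FreeMonoid.toList u) = 0)
    (hv : imbL (FreeMonoid.toList v) = 0) (hw : imbL (FreeMonoid.toList w) = 0)
    (hlt : RnuF u < RnuF v) :
    RnuF (u * w) < RnuF (v * w) ∧ RnuF (w * u) < RnuF (w * v) := by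
  simp only [RnuF] at hlt ⊢
  rw [Prod.Lex.lt_iff, ofLex_toLex, ofLex_toLex] at hlt
  constructor
  · rw [Prod.Lex.lt_iff, ofLex_toLex, ofLex_toLex]
    simp only [toList_mul', nuL_append hu, nuL_append hv]
    rcases hlt with h | ⟨h1, h2⟩
    · exact Or.inl (by omega)
    · exact Or.inr ⟨by omega, numL_append_lt_right h2 _⟩
  · rw [Prod.Lex.lt_iff, ofLex_toLex, ofLex_toLex]
    simp only [toList_mul', nuL_append hw]
    rcases hlt with h | ⟨h1, h2⟩
    · exact Or.inl (by omega)
    · exact Or.inr ⟨by omega, numL_append_lt_left h2 _⟩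

theorem RnuF_inj {u v : W} (hlt : RnuF u = RnuF v) : u = v := by
  have h := toLex.injective hlt
  exact Rnum_inj (congrArg Prod.snd h)

theorem lex_le_fst {α β : Type*} [LinearOrder α] [LinearOrder β] {p q : α × β}
    (h : toLex p ≤ toLex q) : p.1 ≤ q.1 := by
  rcases (Prod.Lex.le_iff (x := toLex p) (y := toLex q)).1 h with h | h
  · exact le_of_lt h
  · exact le_of_eq h.1

end Algebra
end
end BergmanAux

open BergmanAux

/-- (Bergman) If `f ∈ C` and `f = g·h` is any factorization of `f` in `F⟨x,y⟩`,
then both factors `g` and `h` lie in `C`. -/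
theorem bergman_factors_in_C (F : Type*) [Field F]
    (f g h : MonoidAlgebra F (FreeMonoid Bool))
    (hf : f ∈ bergmanC F) (hfgh : f = g * h) (hf0 : f ≠ 0) :
    g ∈ bergmanC F ∧ h ∈ bergmanC F := by
  classical
  have hg0 : g ≠ 0 := by rintro rfl; rw [zero_mul] at hfgh; exact hf0 hfgh
  have hh0 : h ≠ 0 := by rintro rfl; rw [mul_zero] at hfgh; exact hf0 hfgh
  obtain ⟨hfsupp, hf'supp⟩ := bergmanC_supp F hf
  -- Step A : imbalance homogeneity of g and h
  obtain ⟨a1, ha1, b1, hb1, ha1max, hb1max, hab1mem, -⟩ :=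
    KL RimbPF Set.univ (fun {u v w} _ _ _ hlt => RimbP_mono hlt w)
      (fun {u v} _ _ he => RimbP_inj he) g h hg0 hh0
      (fun w _ => Set.mem_univ w) (fun w _ => Set.mem_univ w)
  obtain ⟨a2, ha2, b2, hb2, ha2max, hb2max, hab2mem, -⟩ :=
    KL RimbMF Set.univ (fun {u v w} _ _ _ hlt => RimbM_mono hlt w)
      (fun {u v} _ _ he => RimbM_inj he) g h hg0 hh0
      (fun w _ => Set.mem_univ w) (fun w _ => Set.mem_univ w)
  rw [← hfgh] at hab1mem hab2mem
  have hsum1 : imbL (FreeMonoid.toList a1) + imbL (FreeMonoid.toList b1) = 0 := by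
    have := hfsupp _ hab1mem
    rwa [toList_mul', imbL_append] at this
  have hsum2 : imbL (FreeMonoid.toList a2) + imbL (FreeMonoid.toList b2) = 0 := by
    have := hfsupp _ hab2mem
    rwa [toList_mul', imbL_append] at this
  have hgle : ∀ w ∈ g.coeff.support, imbL (FreeMonoid.toList w) ≤ imbL (FreeMonoid.toList a1) :=
    fun w hw => lex_le_fst (ha1max w hw)
  have hgge : ∀ w ∈ g.coeff.support, imbL (FreeMonoid.toList a2) ≤ imbL (FreeMonoid.toList w) :=
    fun w hw => by have := lex_le_fst (ha2max w hw); simpa using this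
  have hhle : ∀ w ∈ h.coeff.support, imbL (FreeMonoid.toList w) ≤ imbL (FreeMonoid.toList b1) :=
    fun w hw => lex_le_fst (hb1max w hw)
  have hhge : ∀ w ∈ h.coeff.support, imbL (FreeMonoid.toList b2) ≤ imbL (FreeMonoid.toList w) :=
    fun w hw => by have := lex_le_fst (hb2max w hw); simpa using this
  have ha12 : imbL (FreeMonoid.toList a2) = imbL (FreeMonoid.toList a1) := by
    have h1 := hgle a2 ha2
    have h2 := hgge a1 ha1
    have h3 := hhle b2 hb2
    have h4 := hhge b1 hb1
    omega
  set D := imbL (FreeMonoid.toList a1) with hD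
  have hghom : ∀ w ∈ g.coeff.support, imbL (FreeMonoid.toList w) = D := by
    intro w hw
    have h1 := hgle w hw
    have h2 := hgge w hw
    omega
  have hhhom : ∀ w ∈ h.coeff.support, imbL (FreeMonoid.toList w) = -D := by
    intro w hw
    have h1 := hhle w hw
    have h2 := hhge w hw
    have h3 := hhge b1 hb1
    omega
  -- Step B : D = 0, via the swap automorphism
  have hswf : swA F g * swA F h = f := by
    rw [← map_mul, ← hfgh, swA_fix F hf]
  have hsg0 : swA F g ≠ 0 := by
    intro hc; rw [hc, zero_mul] at hswf; exact hf0 hswf.symm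
  have hsh0 : swA F h ≠ 0 := by
    intro hc; rw [hc, mul_zero] at hswf; exact hf0 hswf.symm
  obtain ⟨a, ha, b, hb, hamax, hbmax, habmem, habbd⟩ :=
    KL RnumF Set.univ (fun {u v w} _ _ _ hlt => Rnum_mono hlt w)
      (fun {u v} _ _ he => Rnum_inj he) g h hg0 hh0
      (fun w _ => Set.mem_univ w) (fun w _ => Set.mem_univ w)
  obtain ⟨a', ha', b', hb', ha'max, hb'max, hab'mem, hab'bd⟩ :=
    KL RnumF Set.univ (fun {u v w} _ _ _ hlt => Rnum_mono hlt w)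
      (fun {u v} _ _ he => Rnum_inj he) (swA F g) (swA F h) hsg0 hsh0
      (fun w _ => Set.mem_univ w) (fun w _ => Set.mem_univ w)
  rw [← hfgh] at habmem habbd
  rw [hswf] at hab'mem hab'bd
  have habe : a * b = a' * b' := by
    have h1 := habbd _ hab'mem
    have h2 := hab'bd _ habmem
    exact Rnum_inj (le_antisymm h2 h1)
  have hlen : (FreeMonoid.toList a).length = (FreeMonoid.toList a').length := by
    obtain ⟨w0, hw0, hw0e⟩ := swA_supp F ha'
    have hl1 : (FreeMonoid.toList a').length ≤ (FreeMonoid.toList a).length := by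
      have := hamax w0 hw0
      have hlen2 := length_le_of_numL_le this
      rw [← hw0e, FreeMonoid.toList_map, List.length_map]
      exact hlen2
    have hl2 : (FreeMonoid.toList a).length ≤ (FreeMonoid.toList a').length := by
      have hmem : FreeMonoid.map not a ∈ (swA F g).coeff.support := by
        rw [swA_eq_mapDomain, show (MonoidAlgebra.mapDomain (FreeMonoid.map not) g).coeff =
            Finsupp.mapDomain (FreeMonoid.map not) g.coeff from rfl,
            Finsupp.mapDomain_support_of_injective
          (fun x y hxy => by
            have : (FreeMonoid.map not (FreeMonoid.map not x)) =
                (FreeMonoid.map not (FreeMonoid.map not y)) := by rw [hxy]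
            rwa [show ∀ z : FreeMonoid Bool, FreeMonoid.map not (FreeMonoid.map not z) = z
              from fun z => FreeMonoid.toList.injective (by
                rw [FreeMonoid.toList_map, FreeMonoid.toList_map, map_not_map_not]),
              show FreeMonoid.map not (FreeMonoid.map not y) = y
              from FreeMonoid.toList.injective (by
                rw [FreeMonoid.toList_map, FreeMonoid.toList_map, map_not_map_not])] at this)]
        exact Finset.mem_image_of_mem _ ha
      have := ha'max _ hmem
      have hlen2 := length_le_of_numL_le this
      rwa [FreeMonoid.toList_map, List.length_map] at hlen2
    omega
  have hta : FreeMonoid.toList a = FreeMonoid.toList a' := by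
    have := congrArg FreeMonoid.toList habe
    rw [toList_mul', toList_mul'] at this
    exact (List.append_inj this hlen).1
  have hD0 : D = 0 := by
    obtain ⟨w0, hw0, hw0e⟩ := swA_supp F ha'
    have h1 : imbL (FreeMonoid.toList a) = D := hghom a ha
    have h2 : imbL (FreeMonoid.toList a') = -D := by
      rw [← hw0e, FreeMonoid.toList_map, imbL_map_not, hghom w0 hw0]
    rw [hta, h2] at h1
    omega
  have hgbal : ∀ w ∈ g.coeff.support, imbL (FreeMonoid.toList w) = 0 := by
    intro w hw; rw [hghom w hw, hD0]
  have hhbal : ∀ w ∈ h.coeff.support, imbL (FreeMonoid.toList w) = 0 := by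
    intro w hw; rw [hhhom w hw, hD0]; ring
  -- Step C : the ν-grading argument
  have hfact : Emap' F f = Emap' F g * Emap' F h := by
    rw [hfgh]; exact Emap'_mul F g h hgbal
  have hg'0 : Emap' F g ≠ 0 := by
    intro hc
    have := Emap_Emap' F g hgbal
    rw [hc, map_zero] at this
    exact hg0 this.symm
  have hh'0 : Emap' F h ≠ 0 := by
    intro hc
    have := Emap_Emap' F h hhbal
    rw [hc, map_zero] at this
    exact hh0 this.symm
  have hg'bal := supp_Emap'_bal F g hgbal
  have hh'bal := supp_Emap'_bal F h hhbal
  obtain ⟨a3, ha3, b3, hb3, ha3max, hb3max, hab3mem, -⟩ :=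
    KL RnuF {w : FreeMonoid Bool | imbL (FreeMonoid.toList w) = 0}
      (fun {u v w} hu hv hw hlt => RnuF_mono hu hv hw hlt)
      (fun {u v} _ _ he => RnuF_inj he) (Emap' F g) (Emap' F h) hg'0 hh'0
      hg'bal hh'bal
  rw [← hfact] at hab3mem
  have hnu3 : nuL (FreeMonoid.toList a3) = 0 ∧ nuL (FreeMonoid.toList b3) = 0 := by
    obtain ⟨-, hnu⟩ := hf'supp _ hab3mem
    rw [toList_mul', nuL_append (hg'bal a3 ha3)] at hnu
    omega
  have hg'S0 : ∀ w ∈ (Emap' F g).coeff.support,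
      imbL (FreeMonoid.toList w) = 0 ∧ nuL (FreeMonoid.toList w) = 0 := by
    intro w hw
    refine ⟨hg'bal w hw, ?_⟩
    have := lex_le_fst (ha3max w hw)
    simp only at this
    omega
  have hh'S0 : ∀ w ∈ (Emap' F h).coeff.support,
      imbL (FreeMonoid.toList w) = 0 ∧ nuL (FreeMonoid.toList w) = 0 := by
    intro w hw
    refine ⟨hh'bal w hw, ?_⟩
    have := lex_le_fst (hb3max w hw)
    simp only at this
    omega
  constructor
  · rw [← Emap_Emap' F g hgbal]
    exact Emap_mem_bergmanC F _ hg'S0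
  · rw [← Emap_Emap' F h hhbal]
    exact Emap_mem_bergmanC F _ hh'S0
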